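/- arXiv:2102.01411 — 4 statements merged into one kernel-verified Lean document; each statement's English description precedes it below -/
import Mathlib

section
/- For every finite graph G, the clustering algorithm Cluster applied to the node set of G results in a partition of the nodes of G: every node of G belongs to exactly one of the (nonempty) clusters produced by the algorithm. -/
/-!
Formalisation of the clustering algorithm `Cluster` from
"Optimisation by Pre-Compilation".

A graph is given by a vertex type `V` with a symmetric adjacency
relation `Adj`.  `Deg N n` is the degree of `n` within the node set `N`,
`NDeg N n` the normalised degree.  An execution of the (nondeterministic)
clustering algorithm is modelled by the inductive predicates
`Propagates` (the propagation phase growing one cluster) and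
`ClusterExec` (the driver, producing the list of clusters).
-/

namespace P2P

variable {V : Type*}

/-- The degree of node `n` within the set of nodes `N`:
the number of nodes in `N \ {n}` adjacent to `n`. -/
noncomputable def Deg (Adj : V → V → Prop) (N : Set V) (n : V) : ℕ :=
  {m ∈ N | m ≠ n ∧ Adj m n}.ncard

/-- The normalised degree of node `n` within the set of nodes `N`:
the number of nodes in `N \ {n}` adjacent to `n` whose degree exceeds `1`. -/
noncomputable def NDeg (Adj : V → V → Prop) (N : Set V) (n : V) : ℕ :=
  {m ∈ N | m ≠ n ∧ Adj m n ∧ 1 < Deg Adj N m}.ncard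

/-- The extension set `I` of the propagation phase: the unclustered nodes
(of `U`) adjacent to some node `n'` of the current cluster `C` with
`NDeg (U ∪ C) n' ≤ 2`, together with the unclustered nodes adjacent to some
node `n'` of `C` with `Deg (U ∪ C) n' = 1`. -/
def extSet (Adj : V → V → Prop) (U C : Set V) : Set V :=
  {n ∈ U | ∃ n' ∈ C, Adj n n' ∧
      (NDeg Adj (U ∪ C) n' ≤ 2 ∨ Deg Adj (U ∪ C) n' = 1)}

/-- `Propagates Adj U C C'` : starting from the set `U` of unclustered nodes
and current cluster `C`, repeatedly adding the extension set (and removing it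
from the unclustered nodes) terminates with final cluster `C'`. -/
inductive Propagates (Adj : V → V → Prop) : Set V → Set V → Set V → Prop
  | done (U C : Set V) : extSet Adj U C = ∅ → Propagates Adj U C C
  | step (U C C' : Set V) : extSet Adj U C ≠ ∅ →
      Propagates Adj (U \ extSet Adj U C) (C ∪ extSet Adj U C) C' →
      Propagates Adj U C C'

/-- `ClusterExec Adj U Cs` : one possible execution of the clustering
algorithm on the set `U` of (still unclustered) nodes, producing the list of
clusters `Cs`.  While unclustered nodes remain, a node `n` of minimal
normalised degree among the unclustered nodes is chosen, the new cluster is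
started as `{n}` and grown by propagation; its nodes are removed from the
unclustered set. -/
inductive ClusterExec (Adj : V → V → Prop) : Set V → List (Set V) → Prop
  | nil : ClusterExec Adj ∅ []
  | cons {U : Set V} {n : V} {C : Set V} {rest : List (Set V)} :
      n ∈ U →
      (∀ m ∈ U, NDeg Adj U n ≤ NDeg Adj U m) →
      Propagates Adj (U \ {n}) {n} C →
      ClusterExec Adj (U \ C) rest →
      ClusterExec Adj U (C :: rest)

/-- A graph is connected if any two nodes are joined by a chain of
adjacent nodes. -/
def Conn (Adj : V → V → Prop) : Prop :=
  ∀ a b : V, Relation.ReflTransGen Adj a b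

end P2P

namespace P2P

lemma Propagates.subset {Adj : V → V → Prop} {U C C' : Set V}
    (h : Propagates Adj U C C') : C ⊆ C' ∧ C' ⊆ U ∪ C := by
  induction h with
  | done U C _ => exact ⟨le_refl _, Set.subset_union_right⟩
  | step U C C' _ _ ih =>
    refine ⟨Set.subset_union_left.trans ih.1, ih.2.trans ?_⟩
    intro x hx
    rcases hx with hx | hx
    · exact Or.inl hx.1
    · rcases hx with hx | hx
      · exact Or.inr hx
      · exact Or.inl hx.1

lemma clusterExec_aux {Adj : V → V → Prop} {U : Set V} {Cs : List (Set V)}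
    (h : ClusterExec Adj U Cs) :
    (∀ C ∈ Cs, C.Nonempty ∧ C ⊆ U) ∧ (∀ v ∈ U, ∃! C, C ∈ Cs ∧ v ∈ C) := by
  induction h with
  | nil => exact ⟨by simp, by simp⟩
  | @cons U n C rest hn _ hprop _ ih =>
    obtain ⟨hC1, hC2⟩ := hprop.subset
    have hCsub : C ⊆ U := by
      intro x hx
      rcases hC2 hx with hx | hx
      · exact hx.1
      · rcases hx with rfl; exact hn
    have hnC : n ∈ C := hC1 rfl
    constructor
    · intro D hD
      rcases List.mem_cons.mp hD with rfl | hD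
      · exact ⟨⟨n, hnC⟩, hCsub⟩
      · exact ⟨(ih.1 D hD).1, (ih.1 D hD).2.trans Set.diff_subset⟩
    · intro v hv
      by_cases hvC : v ∈ C
      · refine ⟨C, ⟨List.mem_cons_self, hvC⟩, ?_⟩
        rintro D ⟨hD, hvD⟩
        rcases List.mem_cons.mp hD with rfl | hD
        · rfl
        · exact absurd hvC ((ih.1 D hD).2 hvD).2
      · obtain ⟨D, ⟨hD, hvD⟩, huniq⟩ := ih.2 v ⟨hv, hvC⟩
        refine ⟨D, ⟨List.mem_cons_of_mem _ hD, hvD⟩, ?_⟩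
        rintro E ⟨hE, hvE⟩
        rcases List.mem_cons.mp hE with rfl | hE
        · exact absurd hvE hvC
        · exact huniq E ⟨hE, hvE⟩

end P2P

open P2P in
/-- For every finite graph `G` (symmetric adjacency `Adj`
on the finite node set `V`), every execution of the clustering algorithm
`Cluster` on the node set of `G` results in a partition of the nodes:
every cluster produced is nonempty, and every node belongs to exactly
one of the clusters. -/
theorem cluster_isPartition {V : Type*} [Fintype V]
    (Adj : V → V → Prop) (hsymm : Symmetric Adj)
    (Cs : List (Set V)) (hexec : ClusterExec Adj Set.univ Cs) :
    (∀ C ∈ Cs, C.Nonempty) ∧ (∀ v : V, ∃! C, C ∈ Cs ∧ v ∈ C) := by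
  obtain ⟨h1, h2⟩ := clusterExec_aux hexec
  exact ⟨fun C hC => (h1 C hC).1, fun v => h2 v (Set.mem_univ v)⟩
end

section
/- If C is a clustering of the node set of a finite graph G produced by the clustering algorithm Cluster, then no cluster contains a node of normalised degree greater than 2 relative to that cluster: for every cluster index i and every node n ∈ C(i), NDeg(C(i), n) ≤ 2. -/
namespace ClusterProof


open P2P

variable {V : Type*} [Fintype V]

lemma deg_mono (Adj : V → V → Prop) {N N' : Set V} (h : N ⊆ N') (n : V) :
    Deg Adj N n ≤ Deg Adj N' n :=
  Set.ncard_le_ncard (fun m hm => ⟨h hm.1, hm.2⟩) (Set.toFinite _)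

lemma ndeg_mono (Adj : V → V → Prop) {N N' : Set V} (h : N ⊆ N') (n : V) :
    NDeg Adj N n ≤ NDeg Adj N' n :=
  Set.ncard_le_ncard
    (fun m hm => ⟨h hm.1, hm.2.1, hm.2.2.1, lt_of_lt_of_le hm.2.2.2 (deg_mono Adj h m)⟩)
    (Set.toFinite _)

lemma ndeg_le_deg (Adj : V → V → Prop) (N : Set V) (n : V) :
    NDeg Adj N n ≤ Deg Adj N n :=
  Set.ncard_le_ncard (fun m hm => ⟨hm.1, hm.2.1, hm.2.2.1⟩) (Set.toFinite _)

lemma propagates_rank (Adj : V → V → Prop) {U C C' : Set V}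
    (h : Propagates Adj U C C') :
    C ⊆ C' ∧ C' ⊆ U ∪ C ∧ ∃ r : V → ℕ, (∀ x ∈ C, r x = 0) ∧
      ∀ x ∈ C', x ∉ C → ∃ p ∈ C',
        (NDeg Adj (U ∪ C) p ≤ 2 ∨ Deg Adj (U ∪ C) p = 1) ∧ Adj x p ∧ r p < r x := by
  classical
  induction h with
  | done U C h =>
    exact ⟨subset_rfl, Set.subset_union_right, fun _ => 0, fun _ _ => rfl,
      fun x hx hx' => absurd hx hx'⟩
  | step U C C' hne hp ih =>
    obtain ⟨hCC', hC'sub, r', hr0, hr⟩ := ih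
    have hIU : extSet Adj U C ⊆ U := fun x hx => hx.1
    have hW : (U \ extSet Adj U C) ∪ (C ∪ extSet Adj U C) = U ∪ C := by
      ext x
      simp only [Set.mem_union, Set.mem_diff]
      constructor
      · rintro (⟨h1, _⟩ | h1 | h1)
        · exact Or.inl h1
        · exact Or.inr h1
        · exact Or.inl (hIU h1)
      · rintro (h1 | h1)
        · by_cases hxI : x ∈ extSet Adj U C
          · exact Or.inr (Or.inr hxI)
          · exact Or.inl ⟨h1, hxI⟩
        · exact Or.inr (Or.inl h1)
    rw [hW] at hC'sub hr
    refine ⟨fun x hx => hCC' (Or.inl hx), hC'sub, ?_⟩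
    refine ⟨fun x => if x ∈ C then 0 else if x ∈ extSet Adj U C then 1 else r' x + 2,
      fun x hx => by simp [hx], ?_⟩
    intro x hx hxC
    by_cases hxI : x ∈ extSet Adj U C
    · have h1 := hxI
      obtain ⟨-, p, hpC, hadj, hcond⟩ := h1
      refine ⟨p, hCC' (Or.inl hpC), hcond, hadj, ?_⟩
      simp [hpC, hxC, hxI]
    · obtain ⟨p, hpC', hcond, hadj, hlt⟩ := hr x hx (by simp [hxC, hxI])
      refine ⟨p, hpC', hcond, hadj, ?_⟩
      simp only [hxC, hxI, if_false]
      have hb : (if p ∈ C then 0 else if p ∈ extSet Adj U C then 1 else r' p + 2) ≤ r' p + 2 := by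
        split_ifs <;> omega
      omega

lemma key (Adj : V → V → Prop) (hsymm : Symmetric Adj)
    (W C' : Set V) (s : V) (hC'W : C' ⊆ W) (hs : s ∈ C') (r : V → ℕ)
    (hstep : ∀ x ∈ C', x ≠ s → ∃ p ∈ C',
      (NDeg Adj W p ≤ 2 ∨ Deg Adj W p = 1) ∧ Adj x p ∧ r p < r x) :
    ∀ n ∈ C', NDeg Adj C' n ≤ 2 := by
  classical
  choose! par hparC hparcond hparadj hparlt using hstep
  intro n hn
  by_contra hcon
  push_neg at hcon
  -- basic facts about `n`
  have hnW : 2 < NDeg Adj W n := lt_of_lt_of_le hcon (ndeg_mono Adj hC'W n)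
  have hDn : 1 < Deg Adj W n := by
    have h1 := ndeg_le_deg Adj W n
    omega
  have hncond : ¬ (NDeg Adj W n ≤ 2 ∨ Deg Adj W n = 1) := by
    rintro (h | h) <;> omega
  -- the seed `s` is a propagator
  have hconds : NDeg Adj W s ≤ 2 ∨ Deg Adj W s = 1 := by
    by_contra hcs
    by_cases hall : ∀ x ∈ C', x = s
    · have hne : n = s := hall n hn
      have hemp : {m ∈ C' | m ≠ n ∧ Adj m n ∧ 1 < Deg Adj C' m} = ∅ := by
        ext m
        simp only [Set.mem_setOf_eq, Set.mem_empty_iff_false, iff_false, not_and]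
        intro hm hmn
        exact absurd ((hall m hm).trans hne.symm) hmn
      have h0 : NDeg Adj C' n = 0 := by
        rw [NDeg, hemp, Set.ncard_empty]
      omega
    · push_neg at hall
      obtain ⟨x, hx, hxs⟩ := hall
      obtain ⟨p0, hp0, hp0min⟩ := Set.exists_min_image
        {p ∈ C' | NDeg Adj W p ≤ 2 ∨ Deg Adj W p = 1} r (Set.toFinite _)
        ⟨par x, hparC x hx hxs, hparcond x hx hxs⟩
      have hp0s : p0 ≠ s := fun h => hcs (h ▸ hp0.2)
      have h1 := hp0min (par p0) ⟨hparC p0 hp0.1 hp0s, hparcond p0 hp0.1 hp0s⟩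
      have h2 := hparlt p0 hp0.1 hp0s
      omega
  have hns : n ≠ s := fun h => hncond (h ▸ hconds)
  -- a node differs from its parent
  have hparne : ∀ x ∈ C', x ≠ s → x ≠ par x := by
    intro x hx hxs h
    have h1 := hparlt x hx hxs
    rw [← h] at h1
    omega
  -- a non-seed parent is heavy
  have hparheavy : ∀ x ∈ C', x ≠ s → par x ≠ s → 1 < Deg Adj W (par x) := by
    intro x hx hxs hps
    have hpC : par x ∈ C' := hparC x hx hxs
    have hgC : par (par x) ∈ C' := hparC _ hpC hps
    have h1 : x ∈ {m ∈ W | m ≠ par x ∧ Adj m (par x)} :=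
      ⟨hC'W hx, hparne x hx hxs, hparadj x hx hxs⟩
    have h2 : par (par x) ∈ {m ∈ W | m ≠ par x ∧ Adj m (par x)} := by
      refine ⟨hC'W hgC, ?_, hsymm (hparadj _ hpC hps)⟩
      intro h
      have h3 := hparlt _ hpC hps
      rw [h] at h3
      omega
    have hxg : x ≠ par (par x) := by
      intro h
      have l1 := hparlt x hx hxs
      have l2 := hparlt _ hpC hps
      rw [← h] at l2
      omega
    show 1 < ({m ∈ W | m ≠ par x ∧ Adj m (par x)}).ncard
    rw [Set.one_lt_ncard_iff (Set.toFinite _)]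
    exact ⟨x, par (par x), h1, h2, hxg⟩
  -- Finset set-up
  set HN : V → Finset V :=
    fun p => (Set.toFinite {m ∈ W | m ≠ p ∧ Adj m p ∧ 1 < Deg Adj W m}).toFinset with hHNdef
  have hHNmem : ∀ p x, x ∈ HN p ↔ (x ∈ W ∧ x ≠ p ∧ Adj x p ∧ 1 < Deg Adj W x) :=
    fun p x => Set.Finite.mem_toFinset _
  have hHNcard : ∀ p, (HN p).card = NDeg Adj W p := by
    intro p
    rw [NDeg, Set.ncard_eq_toFinset_card _ (Set.toFinite _)]
  set M : Finset V :=
    (Set.toFinite {m ∈ C' | m ≠ n ∧ Adj m n ∧ 1 < Deg Adj C' m}).toFinset with hMdef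
  have hMmem : ∀ x, x ∈ M ↔ (x ∈ C' ∧ x ≠ n ∧ Adj x n ∧ 1 < Deg Adj C' x) :=
    fun x => Set.Finite.mem_toFinset _
  have hMcard : NDeg Adj C' n = M.card := by
    rw [NDeg, Set.ncard_eq_toFinset_card _ (Set.toFinite _)]
  set Q : Finset V :=
    (Set.toFinite {p ∈ C' | (NDeg Adj W p ≤ 2 ∨ Deg Adj W p = 1) ∧ 1 < Deg Adj W p}).toFinset
    with hQdef
  have hQmem : ∀ p, p ∈ Q ↔
      (p ∈ C' ∧ (NDeg Adj W p ≤ 2 ∨ Deg Adj W p = 1) ∧ 1 < Deg Adj W p) :=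
    fun p => Set.Finite.mem_toFinset _
  have hQ2 : ∀ p ∈ Q, (HN p).card ≤ 2 := by
    intro p hp
    obtain ⟨-, hc, hh⟩ := (hQmem p).1 hp
    rw [hHNcard]
    have := ndeg_le_deg Adj W p
    rcases hc with h | h <;> omega
  have hparQ : ∀ x ∈ C', x ≠ s → par x ∈ insert s Q := by
    intro x hx hxs
    by_cases h : par x = s
    · rw [h]; exact Finset.mem_insert_self _ _
    · exact Finset.mem_insert_of_mem ((hQmem _).2
        ⟨hparC x hx hxs, hparcond x hx hxs, hparheavy x hx hxs h⟩)
  set T : Finset (V × V) := (insert s Q).biUnion (fun p => {p} ×ˢ HN p) with hTdef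
  have hTmem : ∀ p x, p ∈ insert s Q → x ∈ HN p → (p, x) ∈ T := by
    intro p x hp hx
    exact Finset.mem_biUnion.2
      ⟨p, hp, Finset.mem_product.2 ⟨Finset.mem_singleton_self p, hx⟩⟩
  set Phi : Finset (V × V) :=
    M.image (fun m => if NDeg Adj W m ≤ 2 ∨ Deg Adj W m = 1 then (m, n) else (par m, m))
    with hPhidef
  set D : Finset (V × V) := (Q.erase s).image (fun p => (par p, p)) with hDdef
  set E : Finset (V × V) :=
    ((Q.erase s).filter (fun p => 1 < Deg Adj W (par p))).image (fun p => (p, par p))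
    with hEdef
  -- the three families land inside `T`
  have hsubPhi : Phi ⊆ T := by
    intro z hz
    obtain ⟨m, hm, rfl⟩ := Finset.mem_image.1 hz
    obtain ⟨hmC, hmn, hmadj, hmdeg⟩ := (hMmem m).1 hm
    have hmheavy : 1 < Deg Adj W m := lt_of_lt_of_le hmdeg (deg_mono Adj hC'W m)
    by_cases hc : NDeg Adj W m ≤ 2 ∨ Deg Adj W m = 1
    · rw [if_pos hc]
      refine hTmem _ _ (Finset.mem_insert_of_mem ((hQmem m).2 ⟨hmC, hc, hmheavy⟩)) ?_
      exact (hHNmem m n).2 ⟨hC'W hn, hmn.symm, hsymm hmadj, hDn⟩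
    · rw [if_neg hc]
      have hms : m ≠ s := fun h => hc (h ▸ hconds)
      refine hTmem _ _ (hparQ m hmC hms) ?_
      exact (hHNmem _ m).2 ⟨hC'W hmC, hparne m hmC hms, hparadj m hmC hms, hmheavy⟩
  have hsubD : D ⊆ T := by
    intro z hz
    obtain ⟨p, hp, rfl⟩ := Finset.mem_image.1 hz
    obtain ⟨hps, hpQ⟩ := Finset.mem_erase.1 hp
    obtain ⟨hpC, hpc, hph⟩ := (hQmem p).1 hpQ
    refine hTmem _ _ (hparQ p hpC hps) ?_
    exact (hHNmem _ p).2 ⟨hC'W hpC, hparne p hpC hps, hparadj p hpC hps, hph⟩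
  have hsubE : E ⊆ T := by
    intro z hz
    obtain ⟨p, hp, rfl⟩ := Finset.mem_image.1 hz
    obtain ⟨hp', hpheavy⟩ := Finset.mem_filter.1 hp
    obtain ⟨hps, hpQ⟩ := Finset.mem_erase.1 hp'
    obtain ⟨hpC, hpc, hph⟩ := (hQmem p).1 hpQ
    refine hTmem _ _ (Finset.mem_insert_of_mem hpQ) ?_
    exact (hHNmem p _).2 ⟨hC'W (hparC p hpC hps), (hparne p hpC hps).symm,
      hsymm (hparadj p hpC hps), hpheavy⟩
  -- cardinalities via injectivity
  have hPhicard : Phi.card = M.card := by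
    rw [hPhidef]
    apply Finset.card_image_of_injOn
    intro a ha b hb h
    obtain ⟨-, han, -, -⟩ := (hMmem a).1 ha
    obtain ⟨-, hbn, -, -⟩ := (hMmem b).1 hb
    dsimp only at h
    by_cases ca : NDeg Adj W a ≤ 2 ∨ Deg Adj W a = 1 <;>
      by_cases cb : NDeg Adj W b ≤ 2 ∨ Deg Adj W b = 1
    · rw [if_pos ca, if_pos cb] at h; exact (Prod.ext_iff.1 h).1
    · rw [if_pos ca, if_neg cb] at h; exact absurd (Prod.ext_iff.1 h).2.symm hbn
    · rw [if_neg ca, if_pos cb] at h; exact absurd (Prod.ext_iff.1 h).2 han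
    · rw [if_neg ca, if_neg cb] at h; exact (Prod.ext_iff.1 h).2
  have hDcard : D.card = (Q.erase s).card := by
    rw [hDdef]
    apply Finset.card_image_of_injOn
    intro a _ b _ h
    exact (Prod.ext_iff.1 h).2
  have hEcard : E.card =
      ((Q.erase s).filter (fun p => 1 < Deg Adj W (par p))).card := by
    rw [hEdef]
    apply Finset.card_image_of_injOn
    intro a _ b _ h
    exact (Prod.ext_iff.1 h).1
  -- disjointness
  have hPhi2 : ∀ z ∈ Phi, ¬ (NDeg Adj W z.2 ≤ 2 ∨ Deg Adj W z.2 = 1) := by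
    intro z hz
    obtain ⟨m, hm, rfl⟩ := Finset.mem_image.1 hz
    by_cases hc : NDeg Adj W m ≤ 2 ∨ Deg Adj W m = 1
    · rw [if_pos hc]; exact hncond
    · rw [if_neg hc]; exact hc
  have hDE2 : ∀ z ∈ D ∪ E, (NDeg Adj W z.2 ≤ 2 ∨ Deg Adj W z.2 = 1) := by
    intro z hz
    rcases Finset.mem_union.1 hz with hz | hz
    · obtain ⟨p, hp, rfl⟩ := Finset.mem_image.1 hz
      obtain ⟨hps, hpQ⟩ := Finset.mem_erase.1 hp
      exact ((hQmem p).1 hpQ).2.1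
    · obtain ⟨p, hp, rfl⟩ := Finset.mem_image.1 hz
      obtain ⟨hp', -⟩ := Finset.mem_filter.1 hp
      obtain ⟨hps, hpQ⟩ := Finset.mem_erase.1 hp'
      exact hparcond p ((hQmem p).1 hpQ).1 hps
  have hdisj1 : Disjoint Phi (D ∪ E) :=
    Finset.disjoint_left.2 fun {z} hz hz' => hPhi2 z hz (hDE2 z hz')
  have hdisjDE : Disjoint D E := by
    rw [Finset.disjoint_left]
    intro z hzD hzE
    obtain ⟨p, hp, rfl⟩ := Finset.mem_image.1 hzD
    obtain ⟨q, hq, h⟩ := Finset.mem_image.1 hzE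
    obtain ⟨hps, hpQ⟩ := Finset.mem_erase.1 hp
    obtain ⟨hq', -⟩ := Finset.mem_filter.1 hq
    obtain ⟨hqs, hqQ⟩ := Finset.mem_erase.1 hq'
    have hpC := ((hQmem p).1 hpQ).1
    have hqC := ((hQmem q).1 hqQ).1
    have h1 : q = par p := (Prod.ext_iff.1 h).1
    have h2 : par q = p := (Prod.ext_iff.1 h).2
    have l1 := hparlt p hpC hps
    have l2 := hparlt q hqC hqs
    rw [← h1] at l1
    rw [h2] at l2
    omega
  have hunion : Phi.card + (D.card + E.card) ≤ T.card := by
    have h1 : (D ∪ E).card = D.card + E.card := Finset.card_union_of_disjoint hdisjDE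
    have h2 : (Phi ∪ (D ∪ E)).card = Phi.card + (D ∪ E).card :=
      Finset.card_union_of_disjoint hdisj1
    have h3 : Phi ∪ (D ∪ E) ⊆ T :=
      Finset.union_subset hsubPhi (Finset.union_subset hsubD hsubE)
    have h4 := Finset.card_le_card h3
    omega
  have hTcard : T.card = ∑ p ∈ insert s Q, (HN p).card := by
    rw [hTdef, Finset.card_biUnion]
    · exact Finset.sum_congr rfl fun p _ => by
        rw [Finset.card_product, Finset.card_singleton, one_mul]
    · intro p _ q _ hpq
      rw [Function.onFun_apply, Finset.disjoint_left]
      intro z h1 h2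
      have e1 : z.1 = p := Finset.mem_singleton.1 (Finset.mem_product.1 h1).1
      have e2 : z.1 = q := Finset.mem_singleton.1 (Finset.mem_product.1 h2).1
      exact hpq (e1.symm.trans e2)
  have hQsum : ∑ p ∈ Q, (HN p).card ≤ 2 * Q.card := by
    calc ∑ p ∈ Q, (HN p).card ≤ ∑ _p ∈ Q, 2 := Finset.sum_le_sum hQ2
    _ = 2 * Q.card := by rw [Finset.sum_const, smul_eq_mul, mul_comm]
  -- final case analysis on the seed
  by_cases hsheavy : 1 < Deg Adj W s
  · -- seed heavy: `s ∈ Q`, every parent is heavy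
    have hsQ : s ∈ Q := (hQmem s).2 ⟨hs, hconds, hsheavy⟩
    have hins : insert s Q = Q := Finset.insert_eq_self.2 hsQ
    have hT2 : T.card ≤ 2 * Q.card := by rw [hTcard, hins]; exact hQsum
    have hfilterall :
        (Q.erase s).filter (fun p => 1 < Deg Adj W (par p)) = Q.erase s := by
      rw [Finset.filter_eq_self]
      intro p hp
      obtain ⟨hps, hpQ⟩ := Finset.mem_erase.1 hp
      by_cases h : par p = s
      · rw [h]; exact hsheavy
      · exact hparheavy p ((hQmem p).1 hpQ).1 hps h
    have hq1 : (Q.erase s).card = Q.card - 1 := Finset.card_erase_of_mem hsQ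
    have hQpos : 0 < Q.card := Finset.card_pos.2 ⟨s, hsQ⟩
    rw [hfilterall] at hEcard
    omega
  · -- seed light
    push_neg at hsheavy
    have hsQ : s ∉ Q := fun h => by have := ((hQmem s).1 h).2.2; omega
    have hT2 : T.card ≤ 2 * Q.card + 1 := by
      rw [hTcard, Finset.sum_insert hsQ]
      have h1 : (HN s).card ≤ 1 := by
        rw [hHNcard]
        have := ndeg_le_deg Adj W s
        omega
      omega
    have hq1 : (Q.erase s).card = Q.card := by
      rw [Finset.erase_eq_of_notMem hsQ]
    have hfneg : ((Q.erase s).filter (fun p => ¬ 1 < Deg Adj W (par p))).card ≤ 1 := by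
      rw [Finset.card_le_one]
      intro a ha b hb
      obtain ⟨ha', hah⟩ := Finset.mem_filter.1 ha
      obtain ⟨hb', hbh⟩ := Finset.mem_filter.1 hb
      obtain ⟨has, haQ⟩ := Finset.mem_erase.1 ha'
      obtain ⟨hbs, hbQ⟩ := Finset.mem_erase.1 hb'
      have haC := ((hQmem a).1 haQ).1
      have hbC := ((hQmem b).1 hbQ).1
      have haS : par a = s := by
        by_contra h; exact hah (hparheavy a haC has h)
      have hbS : par b = s := by
        by_contra h; exact hbh (hparheavy b hbC hbs h)
      by_contra hab
      have hcontra : 1 < Deg Adj W s := by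
        show 1 < ({m ∈ W | m ≠ s ∧ Adj m s}).ncard
        rw [Set.one_lt_ncard_iff (Set.toFinite _)]
        refine ⟨a, b, ⟨hC'W haC, has, ?_⟩, ⟨hC'W hbC, hbs, ?_⟩, hab⟩
        · rw [← haS]; exact hparadj a haC has
        · rw [← hbS]; exact hparadj b hbC hbs
      omega
    have hsplit : (Q.erase s).card ≤
        ((Q.erase s).filter (fun p => 1 < Deg Adj W (par p))).card +
        ((Q.erase s).filter (fun p => ¬ 1 < Deg Adj W (par p))).card := by
      have hsub : Q.erase s ⊆
          (Q.erase s).filter (fun p => 1 < Deg Adj W (par p)) ∪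
          (Q.erase s).filter (fun p => ¬ 1 < Deg Adj W (par p)) := by
        intro x hx
        by_cases h : 1 < Deg Adj W (par x)
        · exact Finset.mem_union_left _ (Finset.mem_filter.2 ⟨hx, h⟩)
        · exact Finset.mem_union_right _ (Finset.mem_filter.2 ⟨hx, h⟩)
      calc (Q.erase s).card ≤ _ := Finset.card_le_card hsub
      _ ≤ _ := Finset.card_union_le _ _
    omega

lemma cluster_aux (Adj : V → V → Prop) (hsymm : Symmetric Adj) :
    ∀ {U : Set V} {Cs : List (Set V)}, ClusterExec Adj U Cs →
      ∀ C ∈ Cs, ∀ n ∈ C, NDeg Adj C n ≤ 2 := by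
  intro U Cs h
  induction h with
  | nil => simp
  | @cons U n C rest hnU hmin hprop hrest ih =>
    intro C0 hC0
    rcases List.mem_cons.1 hC0 with rfl | hC0
    · obtain ⟨hCC', hC'sub, r, hr0, hr⟩ := propagates_rank Adj hprop
      have hUeq : (U \ {n}) ∪ {n} = U :=
        Set.diff_union_of_subset (Set.singleton_subset_iff.2 hnU)
      rw [hUeq] at hC'sub hr
      exact key Adj hsymm U C0 n hC'sub (hCC' rfl) r
        (fun x hx hxs => hr x hx (by simpa using hxs))
    · exact ih C0 hC0

end ClusterProof

open P2P in
/-- If `Cs` is a clustering of the node set of a finite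
graph produced by (any execution of) the clustering algorithm `Cluster`,
then no cluster contains a node of normalised degree greater than `2`
relative to that cluster. -/
theorem cluster_ndeg_le_two {V : Type*} [Fintype V]
    (Adj : V → V → Prop) (hsymm : Symmetric Adj)
    (Cs : List (Set V)) (hexec : ClusterExec Adj Set.univ Cs) :
    ∀ C ∈ Cs, ∀ n ∈ C, NDeg Adj C n ≤ 2 := by
  exact ClusterProof.cluster_aux Adj hsymm hexec
end

section
/- If G is a finite connected graph with exactly 3 nodes, then every execution of the clustering algorithm Cluster on the node set of G produces exactly one cluster, containing all three nodes. -/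
section Aux

open P2P

variable {V : Type*} [Fintype V]

lemma ndeg_le_two (Adj : V → V → Prop) (hcard : Fintype.card V = 3)
    (N : Set V) (n : V) : NDeg Adj N n ≤ 2 := by
  have hsub : {m ∈ N | m ≠ n ∧ Adj m n ∧ 1 < Deg Adj N m} ⊆ ({n}ᶜ : Set V) :=
    fun m hm => hm.2.1
  have h1 : ({n}ᶜ : Set V).ncard = 2 := by
    have := Set.ncard_add_ncard_compl ({n} : Set V)
    simp [Set.ncard_univ, hcard, Set.ncard_singleton] at this
    omega
  calc NDeg Adj N n ≤ ({n}ᶜ : Set V).ncard :=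
        Set.ncard_le_ncard hsub (Set.toFinite _)
    _ = 2 := h1

lemma prop_univ (Adj : V → V → Prop) (hsymm : Symmetric Adj)
    (hconn : Conn Adj) (hcard : Fintype.card V = 3) :
    ∀ U C C', Propagates Adj U C C' → U ∪ C = Set.univ → Disjoint U C →
      C.Nonempty → C' = Set.univ := by
  intro U C C' h
  induction h with
  | done U C hext =>
    intro huniv hdisj ⟨c, hc⟩
    have hU : U = ∅ := by
      by_contra hne
      obtain ⟨u, hu⟩ := Set.nonempty_iff_ne_empty.mpr hne
      have key : ∀ b, Relation.ReflTransGen Adj c b → b ∈ C := by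
        intro b hb
        induction hb with
        | refl => exact hc
        | tail hab hadj ih =>
          rename_i x y
          by_contra hd
          have hdU : y ∈ U := by
            have hyu : y ∈ U ∪ C := huniv ▸ Set.mem_univ y
            rcases hyu with h | h
            · exact h
            · exact absurd h hd
          have : y ∈ extSet Adj U C :=
            ⟨hdU, x, ih, hsymm hadj, Or.inl (ndeg_le_two Adj hcard _ _)⟩
          rw [hext] at this
          exact this
      exact absurd (key u (hconn c u)) (fun h => Set.disjoint_left.mp hdisj hu h)
    rw [hU, Set.empty_union] at huniv
    exact huniv
  | step U C C' hne _ ih =>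
    intro huniv hdisj hCne
    apply ih
    · rw [← huniv]; ext x
      constructor
      · rintro (⟨hx, _⟩ | (hx | hx))
        · exact Or.inl hx
        · exact Or.inr hx
        · exact Or.inl hx.1
      · intro hx
        by_cases hE : x ∈ extSet Adj U C
        · exact Or.inr (Or.inr hE)
        · rcases hx with hx | hx
          · exact Or.inl ⟨hx, hE⟩
          · exact Or.inr (Or.inl hx)
    · rw [Set.disjoint_left]
      rintro x ⟨hxU, hxE⟩ (hxC | hxE')
      · exact Set.disjoint_left.mp hdisj hxU hxC
      · exact hxE hxE'
    · exact hCne.mono Set.subset_union_left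

lemma clusterExec_empty (Adj : V → V → Prop) (rest : List (Set V))
    (h : ClusterExec Adj ∅ rest) : rest = [] := by
  cases h with
  | nil => rfl
  | cons hn _ _ _ => exact absurd hn (Set.notMem_empty _)

end Aux

open P2P in
/-- If `G` is a finite connected graph with exactly `3`
nodes, then every execution of the clustering algorithm `Cluster` on the
node set of `G` produces exactly one cluster, containing all three nodes. -/
theorem cluster_card_three {V : Type*} [Fintype V]
    (Adj : V → V → Prop) (hsymm : Symmetric Adj) (hconn : Conn Adj)
    (hcard : Fintype.card V = 3)
    (Cs : List (Set V)) (hexec : ClusterExec Adj Set.univ Cs) :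
    Cs = [Set.univ] := by
  generalize hUq : (Set.univ : Set V) = U at hexec
  cases hexec with
  | nil =>
    exfalso
    have h3 : (Set.univ : Set V).ncard = 3 := by simp [Set.ncard_univ, hcard]
    rw [hUq] at h3
    simp at h3
  | cons hn _ hprop hrest =>
    rename_i n C rest hmin
    subst hUq
    have hC : C = Set.univ := by
      apply prop_univ Adj hsymm hconn hcard _ _ _ hprop
      · simp
      · exact Set.disjoint_sdiff_left
      · exact ⟨n, rfl⟩
    subst hC
    have : rest = [] := clusterExec_empty Adj rest (by simpa using hrest)
    simp [this]
end

section
/- Let G be a finite connected graph with n nodes and consider the hyper-clustering procedure HCluster, which repeatedly replaces the current (hyper)graph by the hypergraph whose nodes are the clusters produced by the clustering algorithm Cluster, stopping as soon as the current connected (hyper)graph H satisfies |E(H)| = |N(H)| − 1 (i.e., is acyclic). Then HCluster terminates, and the number of calls it makes to Cluster is at most ⌈n/2⌉. -/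
namespace P2P

universe u

/-- A finite simple graph, bundled with its vertex type.  The nodes of the
hypergraphs produced by `HCluster` are clusters, i.e. sets of nodes of the
previous level, so the vertex type changes from level to level. -/
structure FinSG : Type (u + 1) where
  V : Type u
  fin : Fintype V
  G : SimpleGraph V

attribute [instance] FinSG.fin

/-- The stopping condition of `HCluster`: the current connected (hyper)graph
satisfies `|E| = |N| - 1`, i.e. it is acyclic. -/
def Stopped (A : FinSG) : Prop :=
  A.G.edgeSet.ncard = Fintype.card A.V - 1

/-- One step of `HCluster`: the (hyper)graph `B` is (isomorphic to) the
hypergraph obtained from `A` by one call of the clustering algorithm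
`Cluster`; its nodes are the clusters of some execution of `Cluster` on the
node set of `A`, two distinct clusters being adjacent iff they contain nodes
adjacent in `A`. -/
def HStep (A B : FinSG) : Prop :=
  ∃ Cs : List (Set A.V), ClusterExec A.G.Adj Set.univ Cs ∧
    ∃ e : B.V ≃ {C : Set A.V // C ∈ Cs},
      ∀ b b' : B.V, B.G.Adj b b' ↔
        ((e b).1 ≠ (e b').1 ∧ ∃ x ∈ (e b).1, ∃ y ∈ (e b').1, A.G.Adj x y)

/-- `HRun A k B` : a run of `HCluster` starting at the (hyper)graph `A`
making `k` calls to `Cluster` and currently at the (hyper)graph `B`; each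
call is only made when the stopping condition does not yet hold. -/
inductive HRun : FinSG → ℕ → FinSG → Prop
  | refl (A : FinSG) : HRun A 0 A
  | step {A B C : FinSG} {k : ℕ} :
      ¬ Stopped A → HStep A B → HRun B k C → HRun A (k + 1) C

end P2P

/-! ### Auxiliary development -/

namespace P2P

section SetLevel

variable {V : Type*} {Adj : V → V → Prop}

/-- The propagation condition on a cluster node. -/
def Cond (Adj : V → V → Prop) (N : Set V) (n : V) : Prop :=
  NDeg Adj N n ≤ 2 ∨ Deg Adj N n = 1

lemma mem_extSet {U C : Set V} {n : V} :
    n ∈ extSet Adj U C ↔ n ∈ U ∧ ∃ n' ∈ C, Adj n n' ∧ Cond Adj (U ∪ C) n' :=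
  Iff.rfl

lemma extSet_subset {U C : Set V} : extSet Adj U C ⊆ U := fun _ h => h.1

lemma degSet_subset {U : Set V} {n : V} : {m ∈ U | m ≠ n ∧ Adj m n} ⊆ U := fun _ h => h.1

lemma ndegSet_subset {U : Set V} {n : V} :
    {m ∈ U | m ≠ n ∧ Adj m n ∧ 1 < Deg Adj U m} ⊆ U := fun _ h => h.1

lemma NDeg_le_Deg (hU : Set.Finite U) (n : V) : NDeg Adj U n ≤ Deg Adj U n :=
  Set.ncard_le_ncard (fun m hm => ⟨hm.1, hm.2.1, hm.2.2.1⟩) (hU.subset degSet_subset)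

lemma Deg_pos (hU : Set.Finite U) {m n : V} (hm : m ∈ U) (hmn : m ≠ n) (ha : Adj m n) :
    1 ≤ Deg Adj U n := by
  have : ({m' ∈ U | m' ≠ n ∧ Adj m' n} : Set V).Nonempty := ⟨m, hm, hmn, ha⟩
  exact (Set.ncard_pos (hU.subset degSet_subset)).2 this

lemma Deg2_avoid (hU : Set.Finite U) {n : V} (h : 2 ≤ Deg Adj U n) (x : V) :
    ∃ w ∈ U, w ≠ n ∧ w ≠ x ∧ Adj w n := by
  have hfin : ({m ∈ U | m ≠ n ∧ Adj m n} : Set V).Finite := hU.subset degSet_subset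
  obtain ⟨a, ha, b, hb, hab⟩ := (Set.one_lt_ncard hfin).1 h
  rcases eq_or_ne a x with hax | hax
  · exact ⟨b, hb.1, hb.2.1, fun h' => hab (hax.trans h'.symm), hb.2.2⟩
  · exact ⟨a, ha.1, ha.2.1, hax, ha.2.2⟩

lemma NDeg3_avoid (hU : Set.Finite U) {n : V} (h : 2 < NDeg Adj U n) (x : V) :
    ∃ w ∈ U, w ≠ n ∧ w ≠ x ∧ Adj w n ∧ 1 < Deg Adj U w := by
  have hfin : ({m ∈ U | m ≠ n ∧ Adj m n ∧ 1 < Deg Adj U m} : Set V).Finite :=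
    hU.subset ndegSet_subset
  obtain ⟨a, b, c, ha, hb, hc, hab, hac, hbc⟩ := (Set.two_lt_ncard_iff hfin).1 h
  rcases eq_or_ne a x with hax | hax
  · exact ⟨b, hb.1, hb.2.1, fun h' => hab (hax.trans h'.symm), hb.2.2.1, hb.2.2.2⟩
  · exact ⟨a, ha.1, ha.2.1, hax, ha.2.2.1, ha.2.2.2⟩

lemma Deg_diff_singleton (hU : Set.Finite U) (x n : V) :
    Deg Adj U n ≤ Deg Adj (U \ {x}) n + 1 := by
  have hsub : {m ∈ U | m ≠ n ∧ Adj m n} ⊆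
      insert x {m ∈ U \ {x} | m ≠ n ∧ Adj m n} := by
    intro m hm
    rcases eq_or_ne m x with rfl | hmx
    · exact Set.mem_insert _ _
    · exact Set.mem_insert_of_mem _ ⟨⟨hm.1, hmx⟩, hm.2⟩
  calc Deg Adj U n ≤ (insert x {m ∈ U \ {x} | m ≠ n ∧ Adj m n}).ncard :=
        Set.ncard_le_ncard hsub (((hU.diff).subset degSet_subset).insert x)
    _ ≤ Deg Adj (U \ {x}) n + 1 := Set.ncard_insert_le _ _

lemma Propagates.start_subset {U C C' : Set V} (h : Propagates Adj U C C') : C ⊆ C' := by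
  induction h with
  | done U C he => exact subset_rfl
  | step U C C' hne hp ih => exact Set.subset_union_left.trans ih

lemma union_ext_eq {U C : Set V} :
    (U \ extSet Adj U C) ∪ (C ∪ extSet Adj U C) = U ∪ C := by
  ext x
  simp only [Set.mem_union, Set.mem_diff]
  constructor
  · rintro (⟨h, -⟩ | h | h)
    · exact Or.inl h
    · exact Or.inr h
    · exact Or.inl (extSet_subset h)
  · rintro (h | h)
    · by_cases hx : x ∈ extSet Adj U C
      · exact Or.inr (Or.inr hx)
      · exact Or.inl ⟨h, hx⟩
    · exact Or.inr (Or.inl h)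

lemma Propagates.subset_union {U C C' : Set V} (h : Propagates Adj U C C') : C' ⊆ U ∪ C := by
  induction h with
  | done U C he => exact Set.subset_union_right
  | step U C C' hne hp ih => exact ih.trans (union_ext_eq (Adj := Adj)).subset

lemma Propagates.final {U C C' : Set V} (h : Propagates Adj U C C') :
    Disjoint U C → extSet Adj ((U ∪ C) \ C') C' = ∅ := by
  induction h with
  | done U C he =>
      intro hd
      rw [Set.union_diff_right, hd.sdiff_eq_left]
      exact he
  | step U C C' hne hp ih =>
      intro hd
      have hd' : Disjoint (U \ extSet Adj U C) (C ∪ extSet Adj U C) := by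
        rw [Set.disjoint_union_right]
        exact ⟨hd.mono_left Set.diff_subset, Set.disjoint_sdiff_left⟩
      have := ih hd'
      rwa [union_ext_eq (Adj := Adj)] at this

lemma Propagates.cond_start {U C C' : Set V} (h : Propagates Adj U C C') (hne : C' ≠ C) :
    ∃ n' ∈ C, Cond Adj (U ∪ C) n' := by
  cases h with
  | done _ _ he => exact absurd rfl hne
  | step _ _ _ hme hp =>
      obtain ⟨u, hu⟩ := Set.nonempty_iff_ne_empty.2 hme
      obtain ⟨-, n', hn', -, hc⟩ := hu
      exact ⟨n', hn', hc⟩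

section Cluster

variable {U C : Set V} {n : V}

lemma diff_singleton_union (hn : n ∈ U) : (U \ {n}) ∪ ({n} : Set V) = U :=
  Set.diff_union_of_subset (Set.singleton_subset_iff.2 hn)

lemma cluster_mem (hprop : Propagates Adj (U \ {n}) {n} C) : n ∈ C :=
  hprop.start_subset rfl

lemma cluster_subset (hn : n ∈ U) (hprop : Propagates Adj (U \ {n}) {n} C) : C ⊆ U :=
  hprop.subset_union.trans (by rw [diff_singleton_union hn])

lemma cluster_final (hn : n ∈ U) (hprop : Propagates Adj (U \ {n}) {n} C) :
    extSet Adj (U \ C) C = ∅ := by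
  have := hprop.final Set.disjoint_sdiff_left
  rwa [diff_singleton_union hn] at this

lemma cluster_not_cond (hn : n ∈ U) (hprop : Propagates Adj (U \ {n}) {n} C)
    {u c : V} (hu : u ∈ U) (huC : u ∉ C) (hc : c ∈ C) (ha : Adj u c) :
    ¬ Cond Adj U c := by
  intro hcond
  have hfin := cluster_final hn hprop
  have hUC : (U \ C) ∪ C = U := Set.diff_union_of_subset (cluster_subset hn hprop)
  have : u ∈ extSet Adj (U \ C) C := ⟨⟨hu, huC⟩, c, hc, ha, by rwa [hUC]⟩
  rw [hfin] at this
  exact this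

lemma cluster_absorb (hn : n ∈ U) (hprop : Propagates Adj (U \ {n}) {n} C)
    (hC : C ≠ {n}) {u : V} (hu : u ∈ U) (ha : Adj u n) : u ∈ C := by
  by_contra huC
  obtain ⟨n', hn', hcond⟩ := hprop.cond_start hC
  rw [Set.mem_singleton_iff] at hn'
  subst hn'
  rw [diff_singleton_union hn] at hcond
  exact cluster_not_cond hn hprop hu huC (cluster_mem hprop) ha hcond

end Cluster

section Exec

variable {U : Set V} {Cs : List (Set V)}

lemma ClusterExec.cluster_sub (h : ClusterExec Adj U Cs) : ∀ C ∈ Cs, C ⊆ U := by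
  induction h with
  | nil => simp
  | cons hn hmin hprop hrest ih =>
      intro D hD
      rcases List.mem_cons.1 hD with rfl | hD
      · exact cluster_subset hn hprop
      · exact (ih D hD).trans Set.diff_subset

lemma ClusterExec.cluster_nonempty (h : ClusterExec Adj U Cs) : ∀ C ∈ Cs, C.Nonempty := by
  induction h with
  | nil => simp
  | cons hn hmin hprop hrest ih =>
      intro D hD
      rcases List.mem_cons.1 hD with rfl | hD
      · exact ⟨_, cluster_mem hprop⟩
      · exact ih D hD

lemma ClusterExec.cover (h : ClusterExec Adj U Cs) : ∀ x ∈ U, ∃ C ∈ Cs, x ∈ C := by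
  induction h with
  | nil => simp
  | cons hn hmin hprop hrest ih =>
      intro x hx
      rename_i U' n' C' rest'
      by_cases hxC : x ∈ C'
      · exact ⟨C', List.mem_cons_self, hxC⟩
      · obtain ⟨D, hD, hxD⟩ := ih x ⟨hx, hxC⟩
        exact ⟨D, List.mem_cons_of_mem _ hD, hxD⟩

lemma ClusterExec.unique (h : ClusterExec Adj U Cs) :
    ∀ C₁ ∈ Cs, ∀ C₂ ∈ Cs, ∀ x, x ∈ C₁ → x ∈ C₂ → C₁ = C₂ := by
  induction h with
  | nil => simp
  | cons hn hmin hprop hrest ih =>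
      intro C₁ hC₁ C₂ hC₂ x hx₁ hx₂
      rcases List.mem_cons.1 hC₁ with h1 | h1 <;> rcases List.mem_cons.1 hC₂ with h2 | h2
      · rw [h1, h2]
      · rw [h1] at hx₁
        exact absurd hx₁ (hrest.cluster_sub C₂ h2 hx₂).2.elim
      · rw [h2] at hx₂
        exact absurd hx₂ (hrest.cluster_sub C₁ h1 hx₁).2.elim
      · exact ih C₁ h1 C₂ h2 x hx₁ hx₂

lemma ClusterExec.length_le (h : ClusterExec Adj U Cs) : U.Finite → Cs.length ≤ U.ncard := by
  induction h with
  | nil => simp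
  | cons hn hmin hprop hrest ih =>
      intro hU
      rename_i U' n' C' rest'
      have hsub : U' \ C' ⊆ U' \ {n'} :=
        Set.diff_subset_diff_right (Set.singleton_subset_iff.2 (cluster_mem hprop))
      have h1 : (U' \ C').ncard ≤ (U' \ {n'}).ncard :=
        Set.ncard_le_ncard hsub (hU.subset Set.diff_subset)
      have h2 : (U' \ {n'}).ncard = U'.ncard - 1 := by
        rw [Set.ncard_diff (Set.singleton_subset_iff.2 hn), Set.ncard_singleton]
      have h3 := ih (hU.subset Set.diff_subset)
      have h4 : 1 ≤ U'.ncard := (Set.ncard_pos hU).2 ⟨n', hn⟩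
      simp only [List.length_cons]
      omega

end Exec

section Bounds

variable {U : Set V} {Cs : List (Set V)}

/-- `U` contains an edge. -/
def HasEdge (Adj : V → V → Prop) (U : Set V) : Prop :=
  ∃ a ∈ U, ∃ b ∈ U, a ≠ b ∧ Adj a b

/-- Connectivity of the graph induced on `U`. -/
def ConnOn (Adj : V → V → Prop) (U : Set V) : Prop :=
  ∀ a ∈ U, ∀ b ∈ U, Relation.ReflTransGen (fun x y => x ∈ U ∧ y ∈ U ∧ Adj x y) a b

lemma ConnOn.neighbor (hc : ConnOn Adj U) (hirr : ∀ x, ¬ Adj x x)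
    (h3 : 2 ≤ U.ncard) {v : V} (hv : v ∈ U) : ∃ w ∈ U, w ≠ v ∧ Adj v w := by
  obtain ⟨u, hu, huv⟩ := Set.exists_ne_of_one_lt_ncard h3 v
  rcases (hc v hv u hu).cases_head with heq | ⟨w, ⟨-, hwU, hadj⟩, -⟩
  · exact absurd heq.symm huv
  · exact ⟨w, hwU, fun h => hirr v (h ▸ hadj), hadj⟩

lemma ClusterExec.edge_bound (h : ClusterExec Adj U Cs) (hsym : Symmetric Adj) :
    U.Finite → HasEdge Adj U → Cs.length + 1 ≤ U.ncard := by
  induction h with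
  | nil => rintro - ⟨a, ha, -⟩; exact absurd ha (Set.notMem_empty a)
  | cons hn hmin hprop hrest ih =>
      rename_i U n C rest
      intro hU hedge
      have hnC := cluster_mem hprop
      have hCU := cluster_subset hn hprop
      have hU1 : 1 ≤ U.ncard := (Set.ncard_pos hU).2 ⟨n, hn⟩
      have hdiffn : (U \ {n}).ncard = U.ncard - 1 := by
        rw [Set.ncard_diff (Set.singleton_subset_iff.2 hn), Set.ncard_singleton]
      by_cases hC1 : C = {n}
      · subst hC1
        have key : ∀ b ∈ U, b ≠ n → Adj b n → HasEdge Adj (U \ {n}) := by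
          intro b hb hbn hbadj
          have hnotcond : ¬ Cond Adj U n :=
            cluster_not_cond hn hprop hb (by simp [hbn]) hnC hbadj
          unfold Cond at hnotcond
          push_neg at hnotcond
          obtain ⟨w, hw, hwn, -, hwadj, hwdeg⟩ := NDeg3_avoid hU hnotcond.1 n
          obtain ⟨u, hu, huw, hun, huadj⟩ := Deg2_avoid hU hwdeg n
          exact ⟨u, ⟨hu, by simp [hun]⟩, w, ⟨hw, by simp [hwn]⟩, huw, huadj⟩
        have hedge' : HasEdge Adj (U \ {n}) := by
          obtain ⟨a, ha, b, hb, hab, hadj⟩ := hedge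
          by_cases han : a = n
          · exact key b hb (fun h => hab (han.trans h.symm)) (hsym (han ▸ hadj))
          · by_cases hbn : b = n
            · exact key a ha han (hbn ▸ hadj)
            · exact ⟨a, ⟨ha, by simp [han]⟩, b, ⟨hb, by simp [hbn]⟩, hab, hadj⟩
        have := ih (hU.subset Set.diff_subset) hedge'
        simp only [List.length_cons]
        omega
      · have hC2 : 2 ≤ C.ncard := by
          obtain ⟨m, hm, hmn⟩ : ∃ m ∈ C, m ≠ n := by
            by_contra hall
            push_neg at hall
            exact hC1 (Set.eq_singleton_iff_unique_mem.2 ⟨hnC, hall⟩)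
          exact (Set.one_lt_ncard (hU.subset hCU)).2 ⟨m, hm, n, hnC, hmn⟩
        have hdiffC : (U \ C).ncard = U.ncard - C.ncard := Set.ncard_diff hCU (hU.subset hCU)
        have hCle : C.ncard ≤ U.ncard := Set.ncard_le_ncard hCU hU
        have := hrest.length_le (hU.subset Set.diff_subset)
        simp only [List.length_cons]
        omega

lemma pair_edge (hsym : Symmetric Adj) (hU : U.Finite) {C : Set V} {n m w : V}
    (hF3 : ∀ u ∈ U, Adj u n → u ∈ C) (hC : C = {n, m})
    (hw : w ∈ U) (hwC : w ∉ C) (hdeg : 2 ≤ Deg Adj U w) :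
    HasEdge Adj (U \ C) := by
  have hfin : ({m' ∈ U | m' ≠ w ∧ Adj m' w} : Set V).Finite := hU.subset degSet_subset
  obtain ⟨a, haS, b, hbS, hab⟩ := (Set.one_lt_ncard hfin).1 hdeg
  have hne_n : ∀ y, y ∈ U → Adj y w → y ≠ n := by
    intro y hy hyadj hyn
    exact hwC (hF3 w hw (by rw [← hyn]; exact hsym hyadj))
  rcases eq_or_ne a m with ham | ham
  · have hbm : b ≠ m := fun h => hab (ham.trans h.symm)
    have hbn := hne_n b hbS.1 hbS.2.2
    refine ⟨b, ⟨hbS.1, ?_⟩, w, ⟨hw, hwC⟩, hbS.2.1, hbS.2.2⟩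
    rw [hC]
    simp [hbn, hbm]
  · have han := hne_n a haS.1 haS.2.2
    refine ⟨a, ⟨haS.1, ?_⟩, w, ⟨hw, hwC⟩, haS.2.1, haS.2.2⟩
    rw [hC]
    simp [han, ham]

lemma ClusterExec.main_bound (h : ClusterExec Adj U Cs) (hsym : Symmetric Adj)
    (hirr : ∀ x, ¬ Adj x x) :
    U.Finite → ((ConnOn Adj U ∧ 3 ≤ U.ncard) ∨ ((∀ v ∈ U, 2 ≤ Deg Adj U v) ∧ U.Nonempty)) →
    Cs.length + 2 ≤ U.ncard := by
  induction h with
  | nil =>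
      rintro - (⟨-, h3⟩ | ⟨-, hne⟩)
      · simp at h3
      · exact absurd hne (by simp)
  | cons hn hmin hprop hrest ih =>
      rename_i U n C rest
      intro hU hK
      have hnC := cluster_mem hprop
      have hCU := cluster_subset hn hprop
      have hU1 : 1 ≤ U.ncard := (Set.ncard_pos hU).2 ⟨n, hn⟩
      have hdiffn : (U \ {n}).ncard = U.ncard - 1 := by
        rw [Set.ncard_diff (Set.singleton_subset_iff.2 hn), Set.ncard_singleton]
      by_cases hC1 : C = {n}
      · -- singleton cluster: all degrees in `U` are at least 3
        obtain ⟨w, hw, hwn, hwadj⟩ : ∃ w ∈ U, w ≠ n ∧ Adj w n := by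
          rcases hK with ⟨hc, h3⟩ | ⟨hd, -⟩
          · obtain ⟨w, hwU, hwn, hadj⟩ := hc.neighbor hirr (by omega) hn
            exact ⟨w, hwU, hwn, hsym hadj⟩
          · obtain ⟨w, hwU, hwn, -, hadj⟩ := Deg2_avoid hU (hd n hn) n
            exact ⟨w, hwU, hwn, hadj⟩
        have hnotcond : ¬ Cond Adj U n :=
          cluster_not_cond hn hprop hw (by rw [hC1]; simp [hwn]) hnC hwadj
        unfold Cond at hnotcond
        push_neg at hnotcond
        have hdeg3 : ∀ m ∈ U, 3 ≤ Deg Adj U m := by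
          intro m hm
          have h1 := hmin m hm
          have h2 := NDeg_le_Deg (Adj := Adj) hU m
          have h3 := hnotcond.1
          omega
        have hK' : (∀ v ∈ U \ {n}, 2 ≤ Deg Adj (U \ {n}) v) ∧ (U \ {n}).Nonempty := by
          constructor
          · intro v hv
            have h1 := Deg_diff_singleton (Adj := Adj) hU n v
            have h2 := hdeg3 v hv.1
            omega
          · exact ⟨w, hw, by simp [hwn]⟩
        rw [hC1] at ih
        have := ih (hU.subset Set.diff_subset) (Or.inr hK')
        simp only [List.length_cons]
        omega
      · have hF3 : ∀ u ∈ U, Adj u n → u ∈ C := fun u hu ha =>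
          cluster_absorb hn hprop hC1 hu ha
        have hC2 : 2 ≤ C.ncard := by
          obtain ⟨m, hm, hmn⟩ : ∃ m ∈ C, m ≠ n := by
            by_contra hall
            push_neg at hall
            exact hC1 (Set.eq_singleton_iff_unique_mem.2 ⟨hnC, hall⟩)
          exact (Set.one_lt_ncard (hU.subset hCU)).2 ⟨m, hm, n, hnC, hmn⟩
        have hdiffC : (U \ C).ncard = U.ncard - C.ncard := Set.ncard_diff hCU (hU.subset hCU)
        have hCle : C.ncard ≤ U.ncard := Set.ncard_le_ncard hCU hU
        by_cases hCc : C.ncard = 2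
        · -- pair cluster
          obtain ⟨x, y, hxy, hCxy⟩ := Set.ncard_eq_two.1 hCc
          obtain ⟨m, hmn, hCnm⟩ : ∃ m, m ≠ n ∧ C = {n, m} := by
            have hn' : n = x ∨ n = y := by rw [hCxy] at hnC; simpa using hnC
            rcases hn' with rfl | rfl
            · exact ⟨y, Ne.symm hxy, hCxy⟩
            · exact ⟨x, hxy, by rw [hCxy, Set.pair_comm]⟩
          have hU3 : 3 ≤ U.ncard := by
            rcases hK with ⟨-, h3⟩ | ⟨hd, -⟩
            · exact h3
            · obtain ⟨a, haS, b, hbS, hab⟩ :=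
                (Set.one_lt_ncard (hU.subset degSet_subset)).1 (hd n hn)
              exact (Set.two_lt_ncard_iff hU).2
                ⟨a, b, n, haS.1, hbS.1, hn, hab, haS.2.1, hbS.2.1⟩
          have hedge : HasEdge Adj (U \ C) := by
            have hUCne : (U \ C).Nonempty := by
              rw [← Set.ncard_pos (hU.subset Set.diff_subset)]
              omega
            obtain ⟨v, hv⟩ := hUCne
            rcases hK with ⟨hc, -⟩ | ⟨hd, -⟩
            · obtain ⟨w, hwU, hwv, hadj⟩ := hc.neighbor hirr (by omega) hv.1
              have hwn : w ≠ n := fun h => hv.2 (hF3 v hv.1 (by rw [← h]; exact hadj))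
              by_cases hwm : w ∈ C
              · have hwm' : w = m := by
                  rcases (by rw [hCnm] at hwm; exact hwm : w ∈ ({n, m} : Set V)) with h | h
                  · exact absurd h hwn
                  · exact h
                have hnotcond := cluster_not_cond hn hprop hv.1 hv.2 hwm hadj
                unfold Cond at hnotcond
                push_neg at hnotcond
                obtain ⟨w', hw'U, hw'w, hw'n, hw'adj, hw'deg⟩ :=
                  NDeg3_avoid hU hnotcond.1 n
                have hw'C : w' ∉ C := by
                  rw [hCnm]
                  simp [hw'n, hwm' ▸ hw'w]
                exact pair_edge hsym hU hF3 hCnm hw'U hw'C hw'deg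
              · exact ⟨v, hv, w, ⟨hwU, hwm⟩, fun h => hirr v (h ▸ hadj), hadj⟩
            · exact pair_edge hsym hU hF3 hCnm hv.1 hv.2 (hd v hv.1)
          have := hrest.edge_bound hsym (hU.subset Set.diff_subset) hedge
          simp only [List.length_cons]
          omega
        · have := hrest.length_le (hU.subset Set.diff_subset)
          simp only [List.length_cons]
          omega

end Bounds

section Existence

lemma exists_propagates :
    ∀ (k : ℕ) (U C : Set V), U.Finite → U.ncard ≤ k → ∃ C', Propagates Adj U C C' := by
  intro k
  induction k with
  | zero =>
      intro U C hU h0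
      have hUe : U = ∅ := by
        rw [← Set.ncard_eq_zero hU]
        omega
      have he : extSet Adj U C = ∅ :=
        Set.subset_empty_iff.1 (hUe ▸ extSet_subset (Adj := Adj))
      exact ⟨C, .done U C he⟩
  | succ k ih =>
      intro U C hU hk
      by_cases he : extSet Adj U C = ∅
      · exact ⟨C, .done U C he⟩
      · have hne := Set.nonempty_iff_ne_empty.2 he
        have h1 : 1 ≤ (extSet Adj U C).ncard :=
          (Set.ncard_pos (hU.subset extSet_subset)).2 hne
        have h2 : (U \ extSet Adj U C).ncard = U.ncard - (extSet Adj U C).ncard :=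
          Set.ncard_diff extSet_subset (hU.subset extSet_subset)
        obtain ⟨C', hC'⟩ := ih (U \ extSet Adj U C) (C ∪ extSet Adj U C)
          (hU.subset Set.diff_subset) (by omega)
        exact ⟨C', .step U C C' he hC'⟩

lemma exists_clusterexec :
    ∀ (k : ℕ) (U : Set V), U.Finite → U.ncard ≤ k → ∃ Cs, ClusterExec Adj U Cs := by
  intro k
  induction k with
  | zero =>
      intro U hU h0
      have hUe : U = ∅ := by
        rw [← Set.ncard_eq_zero hU]
        omega
      exact ⟨[], hUe ▸ ClusterExec.nil⟩
  | succ k ih =>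
      intro U hU hk
      rcases eq_or_ne U ∅ with hUe | hUe
      · exact ⟨[], hUe ▸ ClusterExec.nil⟩
      · obtain ⟨n, hn, hmin⟩ :=
          Set.exists_min_image U (NDeg Adj U) hU (Set.nonempty_iff_ne_empty.2 hUe)
        obtain ⟨C, hprop⟩ := exists_propagates (Adj := Adj) U.ncard (U \ {n}) {n}
          (hU.subset Set.diff_subset) (Set.ncard_le_ncard Set.diff_subset hU)
        have hnC := cluster_mem hprop
        have hdiffn : (U \ {n}).ncard = U.ncard - 1 := by
          rw [Set.ncard_diff (Set.singleton_subset_iff.2 hn), Set.ncard_singleton]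
        have h1 : 1 ≤ U.ncard := (Set.ncard_pos hU).2 ⟨n, hn⟩
        have hsub : U \ C ⊆ U \ {n} :=
          Set.diff_subset_diff_right (Set.singleton_subset_iff.2 hnC)
        have h2 : (U \ C).ncard ≤ (U \ {n}).ncard :=
          Set.ncard_le_ncard hsub (hU.subset Set.diff_subset)
        obtain ⟨rest, hrest⟩ := ih (U \ C) (hU.subset Set.diff_subset) (by omega)
        exact ⟨C :: rest, .cons hn hmin hprop hrest⟩

end Existence

end SetLevel

section Graph

universe u

lemma list_ncard_le {α : Type*} : ∀ l : List α, {x | x ∈ l}.ncard ≤ l.length := by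
  intro l
  induction l with
  | nil => simp
  | cons a l ih =>
      have h : {x | x ∈ a :: l} = insert a {x | x ∈ l} := by
        ext x
        simp [List.mem_cons]
      rw [h]
      refine le_trans (Set.ncard_insert_le _ _) ?_
      simpa using ih

lemma connOn_univ {W : Type*} {G : SimpleGraph W} (h : G.Connected) :
    ConnOn G.Adj Set.univ := by
  intro a _ b _
  exact Relation.ReflTransGen.mono (p := fun x y => x ∈ (Set.univ : Set W) ∧ y ∈ (Set.univ : Set W) ∧ G.Adj x y) (fun x y hxy => ⟨trivial, trivial, hxy⟩) _ _
    ((SimpleGraph.reachable_iff_reflTransGen a b).1 (h.preconnected a b))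

lemma HStep.card_le {A B : FinSG.{u}} (h : HStep A B) (hconn : A.G.Connected)
    (h3 : 3 ≤ Fintype.card A.V) : Fintype.card B.V + 2 ≤ Fintype.card A.V := by
  obtain ⟨Cs, hce, e, -⟩ := h
  have h1 : Fintype.card B.V = {C : Set A.V | C ∈ Cs}.ncard := by
    rw [← Nat.card_eq_fintype_card, Nat.card_congr e]
    exact Nat.card_coe_set_eq _
  have h2 := list_ncard_le Cs
  have h4 : Cs.length + 2 ≤ (Set.univ : Set A.V).ncard := by
    refine hce.main_bound (fun x y hxy => hxy.symm) A.G.loopless.irrefl Set.finite_univ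
      (Or.inl ⟨connOn_univ hconn, ?_⟩)
    rw [Set.ncard_univ, Nat.card_eq_fintype_card]
    exact h3
  rw [Set.ncard_univ, Nat.card_eq_fintype_card] at h4
  omega

lemma HStep.conn {A B : FinSG.{u}} (h : HStep A B) (hconn : A.G.Connected) :
    B.G.Connected := by
  classical
  obtain ⟨Cs, hce, e, he⟩ := h
  have hcover : ∀ x : A.V, ∃ C ∈ Cs, x ∈ C := fun x => hce.cover x trivial
  let f : A.V → B.V := fun x => e.symm ⟨(hcover x).choose, (hcover x).choose_spec.1⟩
  have hf : ∀ x, x ∈ (e (f x)).1 := by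
    intro x
    show x ∈ (e (e.symm ⟨(hcover x).choose, (hcover x).choose_spec.1⟩)).1
    rw [Equiv.apply_symm_apply]
    exact (hcover x).choose_spec.2
  have hfeq : ∀ (x : A.V) (b : B.V), x ∈ (e b).1 → f x = b := by
    intro x b hx
    have h1 : ((e (f x)).1 : Set A.V) = (e b).1 :=
      hce.unique _ (e (f x)).2 _ (e b).2 x (hf x) hx
    exact e.injective (Subtype.ext h1)
  have hstep : ∀ x y : A.V, A.G.Adj x y → B.G.Reachable (f x) (f y) := by
    intro x y hxy
    by_cases hsame : ((e (f x)).1 : Set A.V) = (e (f y)).1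
    · rw [e.injective (Subtype.ext hsame)]
    · exact ((he (f x) (f y)).2 ⟨hsame, x, hf x, y, hf y, hxy⟩).reachable
  have hlift : ∀ x y : A.V, Relation.ReflTransGen A.G.Adj x y →
      B.G.Reachable (f x) (f y) := by
    intro x y hxy
    induction hxy with
    | refl => exact SimpleGraph.Reachable.refl _
    | tail h1 h2 ih => exact ih.trans (hstep _ _ h2)
  haveI : Nonempty B.V := ⟨f hconn.nonempty.some⟩
  rw [SimpleGraph.connected_iff]
  refine ⟨fun b b' => ?_, ‹Nonempty B.V›⟩
  obtain ⟨x, hx⟩ := hce.cluster_nonempty _ (e b).2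
  obtain ⟨y, hy⟩ := hce.cluster_nonempty _ (e b').2
  have := hlift x y ((SimpleGraph.reachable_iff_reflTransGen x y).1 (hconn.preconnected x y))
  rwa [hfeq x b hx, hfeq y b' hy] at this

lemma stopped_of_small {B : FinSG.{u}} (hconn : B.G.Connected)
    (h2 : Fintype.card B.V ≤ 2) : Stopped B := by
  haveI := hconn.nonempty
  have h1 : 1 ≤ Fintype.card B.V := Fintype.card_pos
  by_cases hc : Fintype.card B.V = 1
  · haveI hsub : Subsingleton B.V := Fintype.card_le_one_iff_subsingleton.1 (by omega)
    have hE : B.G.edgeSet = ∅ := by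
      ext ed
      simp only [Set.mem_empty_iff_false, iff_false]
      refine Sym2.ind (fun x y hxy => ?_) ed
      rw [SimpleGraph.mem_edgeSet] at hxy
      exact B.G.ne_of_adj hxy (Subsingleton.elim x y)
    unfold Stopped
    rw [hE, hc, Set.ncard_empty]
  · have hc2 : Fintype.card B.V = 2 := by omega
    obtain ⟨a, b, hab⟩ := Fintype.exists_pair_of_one_lt_card (α := B.V) (by omega)
    have hall : ∀ c : B.V, c = a ∨ c = b := by
      intro c
      by_contra hcc
      push_neg at hcc
      have h3 : 3 ≤ Fintype.card B.V := by
        classical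
        have h := Finset.card_le_univ ({a, b, c} : Finset B.V)
        have h5 : ({a, b, c} : Finset B.V).card = 3 := by
          rw [Finset.card_insert_of_notMem (by simp [hab, hcc.1.symm]),
            Finset.card_insert_of_notMem (by simp [hcc.2.symm]), Finset.card_singleton]
        rw [h5] at h
        exact h
      omega
    have hadj : B.G.Adj a b := by
      have hr := (SimpleGraph.reachable_iff_reflTransGen a b).1 (hconn.preconnected a b)
      rcases hr.cases_head with heq | ⟨c, hcadj, -⟩
      · exact absurd heq hab
      · rcases hall c with h | h
        · rw [h] at hcadj
          exact absurd hcadj (B.G.loopless.irrefl a)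
        · rwa [h] at hcadj
    have hE : B.G.edgeSet = {s(a, b)} := by
      ext ed
      constructor
      · refine Sym2.ind (fun x y hxy => ?_) ed
        rw [SimpleGraph.mem_edgeSet] at hxy
        have hne := B.G.ne_of_adj hxy
        rw [Set.mem_singleton_iff]
        rcases hall x with rfl | rfl <;> rcases hall y with rfl | rfl
        · exact absurd rfl hne
        · rfl
        · exact Sym2.eq_swap
        · exact absurd rfl hne
      · rw [Set.mem_singleton_iff]
        rintro rfl
        rwa [SimpleGraph.mem_edgeSet]
    unfold Stopped
    rw [hE, hc2, Set.ncard_singleton]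
  
lemma card_ge3 {A : FinSG.{u}} (hconn : A.G.Connected) (hns : ¬ Stopped A) :
    3 ≤ Fintype.card A.V := by
  by_contra h
  exact hns (stopped_of_small hconn (by omega))

lemma exists_hstep (A : FinSG.{u}) : ∃ B : FinSG.{u}, HStep A B := by
  classical
  obtain ⟨Cs, hce⟩ := exists_clusterexec (Adj := A.G.Adj) (Set.univ : Set A.V).ncard
    Set.univ Set.finite_univ le_rfl
  haveI hfin : Finite {C : Set A.V // C ∈ Cs} := (List.finite_toSet Cs).to_subtype
  haveI : Fintype {C : Set A.V // C ∈ Cs} := Fintype.ofFinite _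
  refine ⟨⟨{C : Set A.V // C ∈ Cs}, inferInstance,
    { Adj := fun b b' => b.1 ≠ b'.1 ∧ ∃ x ∈ b.1, ∃ y ∈ b'.1, A.G.Adj x y
      symm := ?_
      loopless := ?_ }⟩, Cs, hce, Equiv.refl _, fun b b' => Iff.rfl⟩
  · constructor; rintro b b' ⟨hne, x, hx, y, hy, hxy⟩
    exact ⟨hne.symm, y, hy, x, hx, hxy.symm⟩
  · constructor; rintro b ⟨hne, -⟩
    exact hne rfl

lemma hrun_bound {A B : FinSG.{u}} {k : ℕ} (h : HRun A k B) :
    A.G.Connected → k ≤ (Fintype.card A.V + 1) / 2 := by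
  induction h with
  | refl A => exact fun _ => Nat.zero_le _
  | step hns hstep hrun ih =>
      intro hconn
      have h3 := card_ge3 hconn hns
      have hcard := hstep.card_le hconn h3
      have hk := ih (hstep.conn hconn)
      omega

lemma exists_run :
    ∀ (N : ℕ) (A : FinSG.{u}), Fintype.card A.V ≤ N → A.G.Connected →
      ∃ k B, HRun A k B ∧ Stopped B ∧ k ≤ (Fintype.card A.V + 1) / 2 := by
  intro N
  induction N with
  | zero =>
      intro A hA hconn
      haveI := hconn.nonempty
      have hpos := Fintype.card_pos (α := A.V)
      exact absurd hA (by omega)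
  | succ N ih =>
      intro A hA hconn
      by_cases hs : Stopped A
      · exact ⟨0, A, .refl A, hs, Nat.zero_le _⟩
      · have h3 := card_ge3 hconn hs
        obtain ⟨B, hstep⟩ := exists_hstep A
        have hcard := hstep.card_le hconn h3
        obtain ⟨k, B', hrun, hstop, hk⟩ := ih B (by omega) (hstep.conn hconn)
        exact ⟨k + 1, B', .step hs hstep hrun, hstop, by omega⟩

end Graph

end P2P

open P2P in
/-- Let `G` be a finite connected graph with `n` nodes.
Then the hyper-clustering procedure `HCluster` terminates, and the number of
calls it makes to `Cluster` is at most `⌈n / 2⌉`: every run of `HCluster`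
from `G` makes at most `⌈n / 2⌉` calls to `Cluster`, and some run reaches a
stopped (acyclic) hypergraph within that many calls. -/
theorem hcluster_terminates {V : Type u} [Fintype V]
    (G : SimpleGraph V) (hconn : G.Connected) :
    (∀ (k : ℕ) (B : FinSG.{u}), HRun ⟨V, ‹Fintype V›, G⟩ k B →
        k ≤ (Fintype.card V + 1) / 2) ∧
    (∃ (k : ℕ) (B : FinSG.{u}), HRun ⟨V, ‹Fintype V›, G⟩ k B ∧ Stopped B ∧
        k ≤ (Fintype.card V + 1) / 2) := by
  constructor
  · intro k B h
    exact hrun_bound h hconn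
  · exact exists_run (Fintype.card V) ⟨V, ‹Fintype V›, G⟩ le_rfl hconn
end
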